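/- Let P ⊆ ℝ^4 be the lattice simplex with vertices u_0 = (5,0,0,0), u_1 = (0,60,0,0), u_2 = (0,0,0,0), u_3 = (8,24,12,0), u_4 = (33,24,72,60), and define P̃_1 = conv((2,0,0,0), (2,42,3,0), (8,24,12,0), (26,18,54,45), (5,0,0,0)), P̃_2 = conv((2,0,0,0), (2,3,0,0), (11,33,21,12), (20,27,42,33), (5,0,0,0)), P̃_3 = conv((2,0,0,0), (2,3,0,0), (8,24,12,0), (14,33,30,24), (5,0,0,0)). Then for each j = 1, 2, 3, P̃_j ⊆ P and P̃_j is a 3-dilation of a lattice simplex: P̃_j = v_j + 3·Q_j for some lattice vector v_j ∈ ℤ^4 and some lattice simplex Q_j ⊆ ℝ^4. -/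

import Mathlib

open Finset Pointwise

noncomputable section

/-- The real point corresponding to a lattice point. -/
def toR {n : ℕ} (v : Fin n → ℤ) : Fin n → ℝ := fun x => (v x : ℝ)

/-- The lattice simplex (as a subset of `ℝ^n`) with the given lattice vertices. -/
def lsimplex {n m : ℕ} (u : Fin m → Fin n → ℤ) : Set (Fin n → ℝ) :=
  convexHull ℝ (Set.range fun i => toR (u i))

/-- The lattice length `l_{ij}` of the edge `u_i u_j`:
the gcd of the coordinates of `u_j - u_i`. -/
def latLen {n m : ℕ} (u : Fin m → Fin n → ℤ) (i j : Fin m) : ℕ :=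
  Finset.univ.gcd fun x => (u j x - u i x).natAbs

/-- `r_{ij,k}`: the least nonnegative residue of `l_{ij}` modulo `k`. -/
def rmod {n m : ℕ} (u : Fin m → Fin n → ℤ) (i j : Fin m) (k : ℕ) : ℕ :=
  latLen u i j % k

/-- The vertices of the `k`-dilation `P_{i,k}`: the vertex `u_i` together with, for `j ≠ i`,
the points `((l_{ij} - r_{ij,k})/l_{ij})·u_j + (r_{ij,k}/l_{ij})·u_i`. -/
def dilVert {n m : ℕ} (u : Fin m → Fin n → ℤ) (i : Fin m) (k : ℕ) (j : Fin m) :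
    Fin n → ℝ :=
  if j = i then toR (u i)
  else
    ((((latLen u i j : ℝ) - (rmod u i j k : ℝ)) / (latLen u i j : ℝ)) • toR (u j))
      + (((rmod u i j k : ℝ) / (latLen u i j : ℝ)) • toR (u i))

/-- The `k`-dilation `P_{i,k}`. -/
def dil {n m : ℕ} (u : Fin m → Fin n → ℤ) (i : Fin m) (k : ℕ) : Set (Fin n → ℝ) :=
  convexHull ℝ (Set.range (dilVert u i k))

/-- The primitive edge vector `ũ_{ij} = (u_j - u_i)/l_{ij}`. -/
def primVec {n m : ℕ} (u : Fin m → Fin n → ℤ) (i j : Fin m) : Fin n → ℝ :=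
  (latLen u i j : ℝ)⁻¹ • (toR (u j) - toR (u i))

/-- The translated `k`-dilation `P_{i,k,t} = P_{i,k} + Σ_{j ≠ i} t_j ũ_{ij}`. -/
def dilT {n m : ℕ} (u : Fin m → Fin n → ℤ) (i : Fin m) (k : ℕ) (t : Fin m → ℕ) :
    Set (Fin n → ℝ) :=
  (fun y => y + ∑ j ∈ Finset.univ.erase i, (t j : ℝ) • primVec u i j) '' dil u i k

/-- The vertices of the simplex of Example 5.1. -/
def uEx : Fin 5 → Fin 4 → ℤ :=
  ![![5, 0, 0, 0], ![0, 60, 0, 0], ![0, 0, 0, 0], ![8, 24, 12, 0], ![33, 24, 72, 60]]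

/-- The vertices of the extra 3-dilation `P̃₁` of Example 5.1. -/
def tP1 : Fin 5 → Fin 4 → ℤ :=
  ![![2, 0, 0, 0], ![2, 42, 3, 0], ![8, 24, 12, 0], ![26, 18, 54, 45], ![5, 0, 0, 0]]

/-- The vertices of the extra 3-dilation `P̃₂` of Example 5.1. -/
def tP2 : Fin 5 → Fin 4 → ℤ :=
  ![![2, 0, 0, 0], ![2, 3, 0, 0], ![11, 33, 21, 12], ![20, 27, 42, 33], ![5, 0, 0, 0]]

/-- The vertices of the extra 3-dilation `P̃₃` of Example 5.1. -/
def tP3 : Fin 5 → Fin 4 → ℤ :=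
  ![![2, 0, 0, 0], ![2, 3, 0, 0], ![8, 24, 12, 0], ![14, 33, 30, 24], ![5, 0, 0, 0]]

lemma mem_lsimplex_of_comb {n m : ℕ} (u : Fin m → Fin n → ℤ) (w : Fin m → ℝ)
    (hw : ∀ i, 0 ≤ w i) (h1 : ∑ i, w i = 1) :
    (∑ i, w i • toR (u i)) ∈ lsimplex u := by
  rw [← Finset.centerMass_eq_of_sum_1 _ _ h1]
  exact Finset.centerMass_mem_convexHull _ (fun i _ => hw i) (by rw [h1]; norm_num)
    (fun i _ => Set.mem_range_self i)

lemma lsimplex_subset_of_vertices {n m m' : ℕ} (W : Fin m' → Fin n → ℤ)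
    (U : Fin m → Fin n → ℤ) (h : ∀ i, toR (W i) ∈ lsimplex U) :
    lsimplex W ⊆ lsimplex U :=
  convexHull_min (Set.range_subset_iff.2 h) (convex_convexHull ℝ _)

def succEquiv : Fin 4 ≃ {i : Fin 5 // i ≠ (0 : Fin 5)} where
  toFun i := ⟨i.succ, Fin.succ_ne_zero i⟩
  invFun i := (i : Fin 5).pred i.2
  left_inv i := by simp
  right_inv i := by simp

lemma affInd_of_det (Q : Fin 5 → Fin 4 → ℤ) (M : Matrix (Fin 4) (Fin 4) ℝ)
    (hM : ∀ i j, M i j = toR (Q i.succ) j - toR (Q 0) j)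
    (h : M.det ≠ 0) :
    AffineIndependent ℝ (fun i => toR (Q i)) := by
  rw [affineIndependent_iff_linearIndependent_vsub ℝ _ 0]
  have hli : LinearIndependent ℝ (fun i => M i) :=
    Matrix.linearIndependent_rows_iff_isUnit.2
      ((Matrix.isUnit_iff_isUnit_det _).2 (isUnit_iff_ne_zero.2 h))
  rw [← linearIndependent_equiv succEquiv]
  convert hli using 1
  funext i
  funext j
  simp only [Function.comp, succEquiv, Equiv.coe_fn_mk, vsub_eq_sub, Pi.sub_apply, hM i j]
  all_goals rfl

def dmap (v : Fin 4 → ℤ) : (Fin 4 → ℝ) →ᵃ[ℝ] (Fin 4 → ℝ) where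
  toFun y := toR v + (3 : ℝ) • y
  linear := (3 : ℝ) • LinearMap.id
  map_vadd' p v' := by
    simp only [vadd_eq_add, smul_add, LinearMap.smul_apply, LinearMap.id_apply]
    abel

lemma lsimplex_dilation (W Q : Fin 5 → Fin 4 → ℤ) (v : Fin 4 → ℤ)
    (h : ∀ i, toR (W i) = toR v + (3 : ℝ) • toR (Q i)) :
    lsimplex W = (fun y => toR v + (3 : ℝ) • y) '' lsimplex Q := by
  have hf : (fun y : Fin 4 → ℝ => toR v + (3 : ℝ) • y) = ⇑(dmap v) := rfl
  have hr : (fun i => toR (W i)) = (⇑(dmap v) ∘ fun i => toR (Q i)) := by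
    funext i
    simpa [dmap, Function.comp] using h i
  rw [lsimplex, lsimplex, hf, AffineMap.image_convexHull, ← Set.range_comp, hr]

set_option maxHeartbeats 1000000 in
/-- each `P̃_j` is contained in `P` and is a 3-dilation of a lattice simplex:
`P̃_j = v_j + 3·Q_j` for some `v_j ∈ ℤ⁴` and lattice simplex `Q_j`. -/
theorem example_extra_dilations_structure :
    ∀ W ∈ ({tP1, tP2, tP3} : Set (Fin 5 → Fin 4 → ℤ)),
      lsimplex W ⊆ lsimplex uEx ∧
      ∃ (v : Fin 4 → ℤ) (Q : Fin 5 → Fin 4 → ℤ),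
        AffineIndependent ℝ (fun i => toR (Q i)) ∧
        lsimplex W = (fun y => toR v + (3 : ℝ) • y) '' lsimplex Q := by
  have memw : ∀ (p : Fin 4 → ℤ) (w : Fin 5 → ℝ), (∀ i, 0 ≤ w i) → ∑ i, w i = 1 →
      toR p = ∑ i, w i • toR (uEx i) → toR p ∈ lsimplex uEx := fun p w hw h1 hp =>
    hp ▸ mem_lsimplex_of_comb uEx w hw h1
  intro W hW
  rcases hW with h | h | h <;> subst h
  · constructor
    · apply lsimplex_subset_of_vertices
      intro i
      fin_cases i
      · exact memw _ ![2/5, 0, 3/5, 0, 0] (by intro i; fin_cases i <;> norm_num)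
          (by norm_num [Fin.sum_univ_five, Matrix.cons_val_two, Matrix.cons_val_three, Matrix.cons_val_four])
          (by funext x; fin_cases x <;>
            norm_num [toR, uEx, tP1, Fin.sum_univ_five, Finset.sum_apply, Matrix.vecHead, Matrix.vecTail, Matrix.cons_val_two, Matrix.cons_val_three, Matrix.cons_val_four])
      · exact memw _ ![0, 3/5, 3/20, 1/4, 0] (by intro i; fin_cases i <;> norm_num)
          (by norm_num [Fin.sum_univ_five, Matrix.cons_val_two, Matrix.cons_val_three, Matrix.cons_val_four])
          (by funext x; fin_cases x <;>
            norm_num [toR, uEx, tP1, Fin.sum_univ_five, Finset.sum_apply, Matrix.vecHead, Matrix.vecTail, Matrix.cons_val_two, Matrix.cons_val_three, Matrix.cons_val_four])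
      · exact memw _ ![0, 0, 0, 1, 0] (by intro i; fin_cases i <;> norm_num)
          (by norm_num [Fin.sum_univ_five, Matrix.cons_val_two, Matrix.cons_val_three, Matrix.cons_val_four])
          (by funext x; fin_cases x <;>
            norm_num [toR, uEx, tP1, Fin.sum_univ_five, Finset.sum_apply, Matrix.vecHead, Matrix.vecTail, Matrix.cons_val_two, Matrix.cons_val_three, Matrix.cons_val_four])
      · exact memw _ ![1/4, 0, 0, 0, 3/4] (by intro i; fin_cases i <;> norm_num)
          (by norm_num [Fin.sum_univ_five, Matrix.cons_val_two, Matrix.cons_val_three, Matrix.cons_val_four])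
          (by funext x; fin_cases x <;>
            norm_num [toR, uEx, tP1, Fin.sum_univ_five, Finset.sum_apply, Matrix.vecHead, Matrix.vecTail, Matrix.cons_val_two, Matrix.cons_val_three, Matrix.cons_val_four])
      · exact memw _ ![1, 0, 0, 0, 0] (by intro i; fin_cases i <;> norm_num)
          (by norm_num [Fin.sum_univ_five, Matrix.cons_val_two, Matrix.cons_val_three, Matrix.cons_val_four])
          (by funext x; fin_cases x <;>
            norm_num [toR, uEx, tP1, Fin.sum_univ_five, Finset.sum_apply, Matrix.vecHead, Matrix.vecTail, Matrix.cons_val_two, Matrix.cons_val_three, Matrix.cons_val_four])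
    · refine ⟨![2, 0, 0, 0],
        ![![0,0,0,0], ![0,14,1,0], ![2,8,4,0], ![8,6,18,15], ![1,0,0,0]],
        affInd_of_det _ (Matrix.of ![![(0:ℝ),14,1,0], ![2,8,4,0], ![8,6,18,15], ![1,0,0,0]]) (fun i j => by fin_cases i <;> fin_cases j <;> norm_num [toR, Matrix.cons_val_two, Matrix.cons_val_three, Matrix.cons_val_four]) ?_, lsimplex_dilation _ _ _ ?_⟩
      · simp [Matrix.det_succ_row_zero, Fin.sum_univ_succ]
        norm_num [Fin.succAbove, Fin.lt_def, Matrix.cons_val_two, Matrix.cons_val_three, Matrix.cons_val_four]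
      · intro i
        fin_cases i <;> (funext x; fin_cases x <;> norm_num [toR, tP1])
  · constructor
    · apply lsimplex_subset_of_vertices
      intro i
      fin_cases i
      · exact memw _ ![2/5, 0, 3/5, 0, 0] (by intro i; fin_cases i <;> norm_num)
          (by norm_num [Fin.sum_univ_five, Matrix.cons_val_two, Matrix.cons_val_three, Matrix.cons_val_four])
          (by funext x; fin_cases x <;>
            norm_num [toR, uEx, tP2, Fin.sum_univ_five, Finset.sum_apply, Matrix.vecHead, Matrix.vecTail, Matrix.cons_val_two, Matrix.cons_val_three, Matrix.cons_val_four])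
      · exact memw _ ![2/5, 1/20, 11/20, 0, 0] (by intro i; fin_cases i <;> norm_num)
          (by norm_num [Fin.sum_univ_five, Matrix.cons_val_two, Matrix.cons_val_three, Matrix.cons_val_four])
          (by funext x; fin_cases x <;>
            norm_num [toR, uEx, tP2, Fin.sum_univ_five, Finset.sum_apply, Matrix.vecHead, Matrix.vecTail, Matrix.cons_val_two, Matrix.cons_val_three, Matrix.cons_val_four])
      · exact memw _ ![0, 1/4, 0, 11/20, 1/5] (by intro i; fin_cases i <;> norm_num)
          (by norm_num [Fin.sum_univ_five, Matrix.cons_val_two, Matrix.cons_val_three, Matrix.cons_val_four])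
          (by funext x; fin_cases x <;>
            norm_num [toR, uEx, tP2, Fin.sum_univ_five, Finset.sum_apply, Matrix.vecHead, Matrix.vecTail, Matrix.cons_val_two, Matrix.cons_val_three, Matrix.cons_val_four])
      · exact memw _ ![1/20, 3/20, 1/20, 1/5, 11/20] (by intro i; fin_cases i <;> norm_num)
          (by norm_num [Fin.sum_univ_five, Matrix.cons_val_two, Matrix.cons_val_three, Matrix.cons_val_four])
          (by funext x; fin_cases x <;>
            norm_num [toR, uEx, tP2, Fin.sum_univ_five, Finset.sum_apply, Matrix.vecHead, Matrix.vecTail, Matrix.cons_val_two, Matrix.cons_val_three, Matrix.cons_val_four])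
      · exact memw _ ![1, 0, 0, 0, 0] (by intro i; fin_cases i <;> norm_num)
          (by norm_num [Fin.sum_univ_five, Matrix.cons_val_two, Matrix.cons_val_three, Matrix.cons_val_four])
          (by funext x; fin_cases x <;>
            norm_num [toR, uEx, tP2, Fin.sum_univ_five, Finset.sum_apply, Matrix.vecHead, Matrix.vecTail, Matrix.cons_val_two, Matrix.cons_val_three, Matrix.cons_val_four])
    · refine ⟨![2, 0, 0, 0],
        ![![0,0,0,0], ![0,1,0,0], ![3,11,7,4], ![6,9,14,11], ![1,0,0,0]],
        affInd_of_det _ (Matrix.of ![![(0:ℝ),1,0,0], ![3,11,7,4], ![6,9,14,11], ![1,0,0,0]]) (fun i j => by fin_cases i <;> fin_cases j <;> norm_num [toR, Matrix.cons_val_two, Matrix.cons_val_three, Matrix.cons_val_four]) ?_, lsimplex_dilation _ _ _ ?_⟩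
      · simp [Matrix.det_succ_row_zero, Fin.sum_univ_succ]
        norm_num [Fin.succAbove, Fin.lt_def, Matrix.cons_val_two, Matrix.cons_val_three, Matrix.cons_val_four]
      · intro i
        fin_cases i <;> (funext x; fin_cases x <;> norm_num [toR, tP2])
  · constructor
    · apply lsimplex_subset_of_vertices
      intro i
      fin_cases i
      · exact memw _ ![2/5, 0, 3/5, 0, 0] (by intro i; fin_cases i <;> norm_num)
          (by norm_num [Fin.sum_univ_five, Matrix.cons_val_two, Matrix.cons_val_three, Matrix.cons_val_four])
          (by funext x; fin_cases x <;>
            norm_num [toR, uEx, tP3, Fin.sum_univ_five, Finset.sum_apply, Matrix.vecHead, Matrix.vecTail, Matrix.cons_val_two, Matrix.cons_val_three, Matrix.cons_val_four])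
      · exact memw _ ![2/5, 1/20, 11/20, 0, 0] (by intro i; fin_cases i <;> norm_num)
          (by norm_num [Fin.sum_univ_five, Matrix.cons_val_two, Matrix.cons_val_three, Matrix.cons_val_four])
          (by funext x; fin_cases x <;>
            norm_num [toR, uEx, tP3, Fin.sum_univ_five, Finset.sum_apply, Matrix.vecHead, Matrix.vecTail, Matrix.cons_val_two, Matrix.cons_val_three, Matrix.cons_val_four])
      · exact memw _ ![0, 0, 0, 1, 0] (by intro i; fin_cases i <;> norm_num)
          (by norm_num [Fin.sum_univ_five, Matrix.cons_val_two, Matrix.cons_val_three, Matrix.cons_val_four])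
          (by funext x; fin_cases x <;>
            norm_num [toR, uEx, tP3, Fin.sum_univ_five, Finset.sum_apply, Matrix.vecHead, Matrix.vecTail, Matrix.cons_val_two, Matrix.cons_val_three, Matrix.cons_val_four])
      · exact memw _ ![0, 7/20, 3/20, 1/10, 2/5] (by intro i; fin_cases i <;> norm_num)
          (by norm_num [Fin.sum_univ_five, Matrix.cons_val_two, Matrix.cons_val_three, Matrix.cons_val_four])
          (by funext x; fin_cases x <;>
            norm_num [toR, uEx, tP3, Fin.sum_univ_five, Finset.sum_apply, Matrix.vecHead, Matrix.vecTail, Matrix.cons_val_two, Matrix.cons_val_three, Matrix.cons_val_four])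
      · exact memw _ ![1, 0, 0, 0, 0] (by intro i; fin_cases i <;> norm_num)
          (by norm_num [Fin.sum_univ_five, Matrix.cons_val_two, Matrix.cons_val_three, Matrix.cons_val_four])
          (by funext x; fin_cases x <;>
            norm_num [toR, uEx, tP3, Fin.sum_univ_five, Finset.sum_apply, Matrix.vecHead, Matrix.vecTail, Matrix.cons_val_two, Matrix.cons_val_three, Matrix.cons_val_four])
    · refine ⟨![2, 0, 0, 0],
        ![![0,0,0,0], ![0,1,0,0], ![2,8,4,0], ![4,11,10,8], ![1,0,0,0]],
        affInd_of_det _ (Matrix.of ![![(0:ℝ),1,0,0], ![2,8,4,0], ![4,11,10,8], ![1,0,0,0]]) (fun i j => by fin_cases i <;> fin_cases j <;> norm_num [toR, Matrix.cons_val_two, Matrix.cons_val_three, Matrix.cons_val_four]) ?_, lsimplex_dilation _ _ _ ?_⟩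
      · simp [Matrix.det_succ_row_zero, Fin.sum_univ_succ]
        norm_num [Fin.succAbove, Fin.lt_def, Matrix.cons_val_two, Matrix.cons_val_three, Matrix.cons_val_four]
      · intro i
        fin_cases i <;> (funext x; fin_cases x <;> norm_num [toR, tP3])
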